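/- Let m ≥ 1 and K = m². Consider the K-user topology α where users are partitioned into m groups G_1,...,G_m of m users each (G_g = {(g-1)m+1, ..., gm}), with α_kk = g for every user k ∈ G_g, cross gains α_ij = g - 1 whenever j ∈ G_g, i ≠ j, and i belongs to a group G_h with h ≤ g, and α_ij = 0 whenever i ∈ G_h with h > g. Then the power allocation r_k = 1 - g for k ∈ G_g achieves d_k(α,r) = 1 for every user k, so D_{Σ,o}(α) ≥ m². -/
import Mathlib


open Finset

/-- Positive part `(x)^+ = max(x,0)`. -/
noncomputable def pPart (x : ℝ) : ℝ := max x 0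

/-- TIN GDoF of user `k` under topology `α` and power allocation `r`:
`d_k(α,r) = (α_kk + r_k - max_{j≠k} (α_kj + r_j)^+)^+` (max over the empty set is 0). -/
noncomputable def gdof {K : ℕ} (α : Fin K → Fin K → ℝ) (r : Fin K → ℝ) (k : Fin K) : ℝ :=
  pPart (α k k + r k -
    ((Finset.univ.erase k).fold max 0 fun j => pPart (α k j + r j)))

/-- Sum GDoF under allocation `r`. -/
noncomputable def sumGdof {K : ℕ} (α : Fin K → Fin K → ℝ) (r : Fin K → ℝ) : ℝ :=
  ∑ k, gdof α r k

/-- Optimal-power-control sum GDoF: supremum over all allocations with `r_k ≤ 0`. -/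
noncomputable def Dopt {K : ℕ} (α : Fin K → Fin K → ℝ) : ℝ :=
  sSup {x : ℝ | ∃ r : Fin K → ℝ, (∀ k, r k ≤ 0) ∧ x = sumGdof α r}

/-- Sum GDoF achieved by binary power control with active set `T`:
`Σ_{k∈T} (α_kk - max_{j∈T, j≠k} α_kj)^+` (max over the empty set is 0). -/
noncomputable def binSum {K : ℕ} (α : Fin K → Fin K → ℝ) (T : Finset (Fin K)) : ℝ :=
  ∑ k ∈ T, pPart (α k k - ((T.erase k).fold max 0 fun j => α k j))

/-- Binary-power-control sum GDoF: maximum over all subsets of active users. -/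
noncomputable def Dbin {K : ℕ} (α : Fin K → Fin K → ℝ) : ℝ :=
  (Finset.univ : Finset (Finset (Fin K))).sup' ⟨∅, Finset.mem_univ ∅⟩ (binSum α)

/-- for the hierarchical topology with `m` groups of `m` users
(`g k = ⌊k/m⌋ + 1` is the group index of user `k`), the allocation `r_k = 1 - g k`
gives every user exactly 1 GDoF, hence `D_{Σ,o}(α) ≥ m²`. -/
theorem stmt_9 (m : ℕ) (hm : 1 ≤ m)
    (g : Fin (m * m) → ℕ) (hg : ∀ k, g k = k.val / m + 1)
    (α : Fin (m * m) → Fin (m * m) → ℝ)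
    (hdiag : ∀ k, α k k = (g k : ℝ))
    (hcross : ∀ i j, i ≠ j → α i j = if g i ≤ g j then (g j : ℝ) - 1 else 0)
    (r : Fin (m * m) → ℝ) (hr : ∀ k, r k = 1 - (g k : ℝ)) :
    (∀ k, gdof α r k = 1) ∧ ((m : ℝ) ^ 2 ≤ Dopt α) := by
  have hg1 : ∀ k, 1 ≤ g k := fun k => by rw [hg]; exact Nat.le_add_left 1 _
  have hfold : ∀ k : Fin (m * m),
      ((Finset.univ.erase k).fold max 0 fun j => pPart (α k j + r j)) = 0 := by
    intro k
    apply le_antisymm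
    · rw [Finset.fold_max_le]
      refine ⟨le_rfl, fun j hj => ?_⟩
      have hjk : j ≠ k := (Finset.mem_erase.mp hj).1
      have h1 : (1 : ℝ) ≤ (g j : ℝ) := by exact_mod_cast hg1 j
      rw [hcross k j hjk.symm, hr]
      by_cases h : g k ≤ g j
      · simp [h, pPart]
      · simp only [h, if_false, pPart]
        apply max_le _ le_rfl
        linarith
    · rw [Finset.le_fold_max]; left; exact le_rfl
  have hgd : ∀ k, gdof α r k = 1 := by
    intro k
    rw [gdof, hfold, hdiag, hr]
    simp [pPart]
  refine ⟨hgd, ?_⟩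
  have hsum : sumGdof α r = (m : ℝ) ^ 2 := by
    rw [sumGdof]
    simp only [hgd]
    simp [Finset.card_univ, pow_two]
  apply le_csSup
  · refine ⟨∑ k, pPart (α k k), ?_⟩
    rintro x ⟨r', hr', rfl⟩
    rw [sumGdof]
    apply Finset.sum_le_sum
    intro k _
    have hfnn : (0:ℝ) ≤ ((Finset.univ.erase k).fold max 0 fun j => pPart (α k j + r' j)) := by
      rw [Finset.le_fold_max]; left; exact le_rfl
    rw [gdof, pPart, pPart]
    apply max_le _ (le_max_right _ _)
    have := hr' k
    calc α k k + r' k - _ ≤ α k k := by linarith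
      _ ≤ max (α k k) 0 := le_max_left _ _
  · refine ⟨r, fun k => ?_, hsum.symm⟩
    rw [hr]
    have : (1:ℝ) ≤ (g k : ℝ) := by exact_mod_cast hg1 k
    linarith
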